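/- Let σ ≥ 2 and let S be a uniformly random string of length n over a σ-letter alphabet. Define growth γ(S) as the least k such that some j with 1 ≤ j < n satisfies S[1, n−k] = S[j+1, j+n−k]. Then there exist c > 0 and n₀ such that for all n > n₀, E[γ(S)] ≥ c·n. -/

import Mathlib

/-- `S[1, n-k] = S[j+1, j+n-k]` (1-indexed): the prefix of length `n-k`
equals the length-`n-k` substring starting at position `j+1`, for a shift
`j` with `1 ≤ j ≤ k`, `j < n`. (0-indexed: `S i = S (j+i)` for `i + k < n`.) -/
def MatchShift {α : Type*} {n : ℕ} (S : Fin n → α) (j k : ℕ) : Prop :=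
  1 ≤ j ∧ j < n ∧ j ≤ k ∧
    ∀ i : ℕ, (h : i + k < n) → (h2 : j + i < n) → S ⟨i, by omega⟩ = S ⟨j + i, h2⟩

/-- The growth `γ(S)`: the least `k` such that `S[1, n-k] = S[j+1, j+n-k]`
for some shift `j` with `1 ≤ j < n`. -/
noncomputable def growth {α : Type*} {n : ℕ} (S : Fin n → α) : ℕ :=
  sInf {k | ∃ j, MatchShift S j k}

open Finset Classical in
lemma count_match (n σ j k : ℕ) (hj : 1 ≤ j) (hjk : j ≤ k) (hjn : j < n) :
    (Finset.univ.filter fun S : Fin n → Fin σ => MatchShift S j k).card ≤ σ ^ k := by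
  classical
  have hn : 0 < n := lt_of_le_of_lt (Nat.zero_le j) hjn
  -- injection into data
  set f : (Fin n → Fin σ) → (Fin j → Fin σ) × (Fin (k - j) → Fin σ) :=
    fun S => (fun a => S ⟨a, lt_trans a.2 hjn⟩, fun a => S ⟨n - 1 - a, by omega⟩) with hf
  have hinj : ∀ S ∈ Finset.univ.filter fun S : Fin n → Fin σ => MatchShift S j k,
      ∀ T ∈ Finset.univ.filter fun S : Fin n → Fin σ => MatchShift S j k,
      f S = f T → S = T := by
    intro S hS T hT hft
    rw [Finset.mem_filter] at hS hT
    have hS := hS.2; have hT := hT.2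
    have h1 : ∀ a : Fin j, S ⟨a, lt_trans a.2 hjn⟩ = T ⟨a, lt_trans a.2 hjn⟩ := by
      intro a; exact congrFun (congrArg Prod.fst hft) a
    have h2 : ∀ a : Fin (k - j), S ⟨n - 1 - a, by omega⟩ = T ⟨n - 1 - a, by omega⟩ := by
      intro a; exact congrFun (congrArg Prod.snd hft) a
    funext p
    obtain ⟨p, hp⟩ := p
    induction p using Nat.strong_induction_on with
    | _ p ih =>
      by_cases hcase : p < j
      · exact h1 ⟨p, hcase⟩
      · by_cases hcase2 : n + j ≤ p + k
        · have ha : n - 1 - p < k - j := by omega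
          have := h2 ⟨n - 1 - p, ha⟩
          have heq : n - 1 - (n - 1 - p) = p := by omega
          simpa [heq] using this
        · have hi : (p - j) + k < n := by omega
          have h2' : j + (p - j) < n := by omega
          have eS := hS.2.2.2 (p - j) hi h2'
          have eT := hT.2.2.2 (p - j) hi h2'
          have hpe : j + (p - j) = p := by omega
          have hlt : p - j < n := by omega
          have ihe : S ⟨p - j, hlt⟩ = T ⟨p - j, hlt⟩ := ih (p - j) (by omega) hlt
          have hfin : (⟨j + (p - j), h2'⟩ : Fin n) = ⟨p, hp⟩ := by simp [hpe]
          have e1 : S ⟨p, hp⟩ = S ⟨p - j, hlt⟩ := by rw [← hfin, ← eS]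
          have e2 : T ⟨p, hp⟩ = T ⟨p - j, hlt⟩ := by rw [← hfin, ← eT]
          rw [e1, ihe, ← e2]
  calc (Finset.univ.filter fun S : Fin n → Fin σ => MatchShift S j k).card
      ≤ (Finset.univ : Finset ((Fin j → Fin σ) × (Fin (k - j) → Fin σ))).card :=
        Finset.card_le_card_of_injOn f (fun _ _ => Finset.mem_univ _) hinj
    _ = σ ^ j * σ ^ (k - j) := by
        simp [Finset.card_univ]
    _ = σ ^ k := by rw [← pow_add]; congr 1; omega

open Finset Classical in
lemma count_growth_le (n σ m : ℕ) (hn : 2 ≤ n) (hσ : 1 ≤ σ) :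
    (Finset.univ.filter fun S : Fin n → Fin σ => growth S ≤ m).card
      ≤ (m + 1) * (m + 1) * σ ^ m := by
  classical
  have hsub : (Finset.univ.filter fun S : Fin n → Fin σ => growth S ≤ m) ⊆
      (Finset.range (m+1) ×ˢ Finset.range (m+1)).biUnion
        (fun q => Finset.univ.filter fun S : Fin n → Fin σ => MatchShift S q.2 q.1) := by
    intro S hSmem
    rw [Finset.mem_filter] at hSmem
    have hne : {k | ∃ j, MatchShift S j k}.Nonempty := by
      refine ⟨n, 1, ?_⟩
      refine ⟨le_refl 1, by omega, by omega, ?_⟩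
      intro i h _; omega
    have hmem : growth S ∈ {k | ∃ j, MatchShift S j k} := Nat.sInf_mem hne
    obtain ⟨j, hj⟩ := hmem
    rw [Finset.mem_biUnion]
    refine ⟨(growth S, j), ?_, ?_⟩
    · rw [Finset.mem_product, Finset.mem_range, Finset.mem_range]
      constructor
      · omega
      · have := hj.2.2.1; have := hSmem.2; omega
    · rw [Finset.mem_filter]; exact ⟨Finset.mem_univ _, hj⟩
  calc (Finset.univ.filter fun S : Fin n → Fin σ => growth S ≤ m).card
      ≤ _ := Finset.card_le_card hsub
    _ ≤ ∑ q ∈ Finset.range (m+1) ×ˢ Finset.range (m+1),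
          (Finset.univ.filter fun S : Fin n → Fin σ => MatchShift S q.2 q.1).card :=
        Finset.card_biUnion_le
    _ ≤ ∑ _q ∈ Finset.range (m+1) ×ˢ Finset.range (m+1), σ ^ m := by
        apply Finset.sum_le_sum
        intro q hq
        rw [Finset.mem_product, Finset.mem_range, Finset.mem_range] at hq
        by_cases hcond : 1 ≤ q.2 ∧ q.2 ≤ q.1 ∧ q.2 < n
        · calc _ ≤ σ ^ q.1 := count_match n σ q.2 q.1 hcond.1 hcond.2.1 hcond.2.2
            _ ≤ σ ^ m := Nat.pow_le_pow_right hσ (by omega)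
        · have : (Finset.univ.filter fun S : Fin n → Fin σ => MatchShift S q.2 q.1) = ∅ := by
            apply Finset.filter_eq_empty_iff.mpr
            intro S _
            intro hms
            exact hcond ⟨hms.1, hms.2.2.1, hms.2.1⟩
          simp [this]
    _ = (m + 1) * (m + 1) * σ ^ m := by
        rw [Finset.sum_const, Finset.card_product, Finset.card_range, smul_eq_mul]

lemma two_sq_le (m : ℕ) (hm : 9 ≤ m) : 2 * ((m + 1) * (m + 1)) ≤ 2 ^ m := by
  induction m with
  | zero => omega
  | succ p ih =>
    rcases Nat.lt_or_ge p 9 with h | h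
    · interval_cases p <;> revert hm <;> norm_num
    · have := ih (by omega)
      have h2 : 2 * ((p + 2) * (p + 2)) ≤ 2 * (2 * ((p + 1) * (p + 1))) := by nlinarith
      calc 2 * ((p + 1 + 1) * (p + 1 + 1)) ≤ 2 * (2 * ((p + 1) * (p + 1))) := h2
        _ ≤ 2 * 2 ^ p := by omega
        _ = 2 ^ (p + 1) := by ring

/-- The expected growth of a uniformly random string of length `n` over a
`σ`-letter alphabet is at least `c·n` for some `c > 0` and all large `n`. -/
theorem stmt15 (σ : ℕ) (hσ : 2 ≤ σ) :
    ∃ c : ℝ, 0 < c ∧ ∃ n₀ : ℕ, ∀ n : ℕ, n₀ < n →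
      (∑ S : Fin n → Fin σ, (growth S : ℝ)) / (σ : ℝ) ^ n ≥ c * n := by


  classical
  refine ⟨1/4, by norm_num, 100, ?_⟩
  intro n hn
  set m := n / 2 with hm
  -- bad count
  set bad := (Finset.univ.filter fun S : Fin n → Fin σ => growth S ≤ m) with hbad
  have hbadcard : bad.card ≤ (m + 1) * (m + 1) * σ ^ m :=
    count_growth_le n σ m (by omega) (by omega)
  have hσm : (2:ℕ) ^ (n - m) ≤ σ ^ (n - m) := Nat.pow_le_pow_left hσ _
  have hkey : 2 * bad.card ≤ σ ^ n := by
    have h1 : 2 * ((m + 1) * (m + 1) * σ ^ m) ≤ σ ^ (n - m) * σ ^ m := by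
      have hh : 2 * ((m + 1) * (m + 1)) ≤ σ ^ (n - m) := by
        calc 2 * ((m + 1) * (m + 1)) ≤ 2 ^ m := two_sq_le m (by omega)
          _ ≤ 2 ^ (n - m) := Nat.pow_le_pow_right (by norm_num) (by omega)
          _ ≤ σ ^ (n - m) := hσm
      calc 2 * ((m + 1) * (m + 1) * σ ^ m) = 2 * ((m + 1) * (m + 1)) * σ ^ m := by ring
        _ ≤ σ ^ (n - m) * σ ^ m := Nat.mul_le_mul_right _ hh
    calc 2 * bad.card ≤ 2 * ((m + 1) * (m + 1) * σ ^ m) := by omega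
      _ ≤ σ ^ (n - m) * σ ^ m := h1
      _ = σ ^ n := by rw [← pow_add]; congr 1; omega
  -- sum lower bound, in ℕ
  have hcard : bad.card + (Finset.univ.filter fun S : Fin n → Fin σ => ¬ growth S ≤ m).card
      = σ ^ n := by
    rw [Finset.card_filter_add_card_filter_not]
    simp [Finset.card_univ]
  set good := (Finset.univ.filter fun S : Fin n → Fin σ => ¬ growth S ≤ m) with hgood
  have hsum : (m + 1) * good.card ≤ ∑ S : Fin n → Fin σ, growth S := by
    calc (m + 1) * good.card = ∑ _S ∈ good, (m + 1) := by
          rw [Finset.sum_const]; ring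
      _ ≤ ∑ S ∈ good, growth S := by
          apply Finset.sum_le_sum
          intro S hS
          rw [hgood, Finset.mem_filter] at hS
          omega
      _ ≤ ∑ S : Fin n → Fin σ, growth S := Finset.sum_le_sum_of_subset (Finset.filter_subset _ _)
  -- pass to ℝ
  have hσpos : (0:ℝ) < (σ:ℝ) ^ n := by positivity
  rw [ge_iff_le, le_div_iff₀ hσpos]
  have hcast : (∑ S : Fin n → Fin σ, (growth S : ℝ)) = ((∑ S : Fin n → Fin σ, growth S : ℕ) : ℝ) := by
    push_cast; ring
  have hineq : (1/4 : ℝ) * n * (σ:ℝ) ^ n ≤ ∑ S : Fin n → Fin σ, (growth S : ℝ) := by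
    rw [hcast]
    have h1 : ((m + 1) * good.card : ℕ) ≤ (∑ S : Fin n → Fin σ, growth S : ℕ) := hsum
    have h2 : (σ:ℕ) ^ n ≤ 2 * good.card + σ ^ n - σ ^ n + σ ^ n := by omega
    have hgoodge : σ ^ n ≤ 2 * good.card := by omega
    have : (1/4 : ℝ) * n * (σ:ℝ) ^ n ≤ ((m + 1) : ℝ) * good.card := by
      have hmn : (n : ℝ) ≤ 2 * ((m:ℝ) + 1) := by
        have : n ≤ 2 * (m + 1) := by omega
        exact_mod_cast this
      have hgr : ((σ:ℝ) ^ n) ≤ 2 * (good.card : ℝ) := by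
        exact_mod_cast hgoodge
      nlinarith [hσpos, (Nat.cast_nonneg good.card : (0:ℝ) ≤ (good.card : ℝ))]
    calc (1/4 : ℝ) * n * (σ:ℝ) ^ n ≤ ((m + 1) : ℝ) * good.card := this
      _ ≤ ((∑ S : Fin n → Fin σ, growth S : ℕ) : ℝ) := by exact_mod_cast h1
  exact hineq
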